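/- For K = Z B Zᵀ + σ²·1 with Z = U₁Γ₁Vᵀ a thin SVD and U = (U₁, U₂) orthogonal, the blocks K_{ij} = U_iᵀ K U_j satisfy K₁₂ = K₂₁ = 0, K₂₂ = σ²·1_{n−d}, and K₁₁ = Γ₁Vᵀ(B + σ² V Γ₁⁻² Vᵀ)VΓ₁; consequently log det K = log det K₁₁ + (n−d) log σ² and tr(K⁻¹C) = tr(K₁₁⁻¹C₁₁) + tr(C₂₂)/σ². -/

import Mathlib

open Matrix

set_option maxHeartbeats 1000000 in

/-- Block structure of `K = Z B Zᵀ + σ²·1` in the SVD basis `(U₁, U₂)` of `Z = U₁Γ₁Vᵀ`: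
`K₁₂ = K₂₁ = 0`, `K₂₂ = σ²·1`, `K₁₁ = Γ₁Vᵀ(B + σ² VΓ₁⁻²Vᵀ)VΓ₁`, and consequently
`log det K = log det K₁₁ + (n−d) log σ²` and `tr(K⁻¹C) = tr(K₁₁⁻¹C₁₁) + tr(C₂₂)/σ²`. -/
theorem stmt13 {d e : ℕ}
    (Z : Matrix (Fin (d + e)) (Fin d) ℝ)
    (U₁ : Matrix (Fin (d + e)) (Fin d) ℝ) (U₂ : Matrix (Fin (d + e)) (Fin e) ℝ)
    (g : Fin d → ℝ) (V : Matrix (Fin d) (Fin d) ℝ)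
    (hU1 : U₁ᵀ * U₁ = 1) (hU2 : U₂ᵀ * U₂ = 1) (hU12 : U₁ᵀ * U₂ = 0)
    (hcomplete : U₁ * U₁ᵀ + U₂ * U₂ᵀ = 1)
    (hg : ∀ i, 0 < g i) (hV : Vᵀ * V = 1) (hV' : V * Vᵀ = 1)
    (hZ : Z = U₁ * Matrix.diagonal g * Vᵀ)
    (B : Matrix (Fin d) (Fin d) ℝ) (hB : B.PosSemidef)
    (σ2 : ℝ) (hσ : 0 < σ2)
    (C : Matrix (Fin (d + e)) (Fin (d + e)) ℝ) :
    let K : Matrix (Fin (d + e)) (Fin (d + e)) ℝ := Z * B * Zᵀ + σ2 • 1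
    let Γ₁ : Matrix (Fin d) (Fin d) ℝ := Matrix.diagonal g
    let K₁₁ : Matrix (Fin d) (Fin d) ℝ := U₁ᵀ * K * U₁
    U₁ᵀ * K * U₂ = 0 ∧ U₂ᵀ * K * U₁ = 0 ∧
      U₂ᵀ * K * U₂ = σ2 • 1 ∧
      K₁₁ = Γ₁ * Vᵀ *
        (B + σ2 • (V * Matrix.diagonal (fun i => ((g i) ^ 2)⁻¹) * Vᵀ)) * V * Γ₁ ∧
      Real.log K.det = Real.log K₁₁.det + e * Real.log σ2 ∧
      (K⁻¹ * C).trace = (K₁₁⁻¹ * (U₁ᵀ * C * U₁)).trace + (U₂ᵀ * C * U₂).trace / σ2 := by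
  intro K Γ₁ K₁₁
  have hgne : ∀ i, g i ≠ 0 := fun i => (hg i).ne'
  have hU21 : U₂ᵀ * U₁ = 0 := by
    have h := congrArg Matrix.transpose hU12
    simpa [Matrix.transpose_mul] using h
  have hZU2 : Zᵀ * U₂ = 0 := by
    rw [hZ]; simp [Matrix.transpose_mul, Matrix.mul_assoc, hU12]
  have hU2Z : U₂ᵀ * Z = 0 := by
    have h := congrArg Matrix.transpose hZU2
    simpa [Matrix.transpose_mul] using h
  have hU1Z : U₁ᵀ * Z = Γ₁ * Vᵀ := by
    rw [hZ, ← Matrix.mul_assoc, ← Matrix.mul_assoc, hU1, Matrix.one_mul]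
  have hΓt : Γ₁ᵀ = Γ₁ := Matrix.diagonal_transpose g
  have hZU1 : Zᵀ * U₁ = V * Γ₁ := by
    have h := congrArg Matrix.transpose hU1Z
    simpa [Matrix.transpose_mul, Matrix.mul_assoc, hΓt] using h
  have hKU2 : K * U₂ = σ2 • U₂ := by
    show (Z * B * Zᵀ + σ2 • 1) * U₂ = σ2 • U₂
    rw [Matrix.add_mul, Matrix.mul_assoc, hZU2, Matrix.mul_zero, zero_add,
      Matrix.smul_mul, Matrix.one_mul]
  have hK12 : U₁ᵀ * K * U₂ = 0 := by
    rw [Matrix.mul_assoc, hKU2, Matrix.mul_smul, hU12, smul_zero]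
  have hK22 : U₂ᵀ * K * U₂ = σ2 • 1 := by
    rw [Matrix.mul_assoc, hKU2, Matrix.mul_smul, hU2]
  have hK21 : U₂ᵀ * K * U₁ = 0 := by
    show U₂ᵀ * (Z * B * Zᵀ + σ2 • 1) * U₁ = 0
    rw [Matrix.mul_add, ← Matrix.mul_assoc, ← Matrix.mul_assoc, hU2Z, Matrix.zero_mul,
      Matrix.zero_mul, zero_add, Matrix.mul_smul, Matrix.mul_one, Matrix.smul_mul, hU21,
      smul_zero]
  have hK11' : K₁₁ = Γ₁ * Vᵀ * B * (V * Γ₁) + σ2 • 1 := by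
    show U₁ᵀ * (Z * B * Zᵀ + σ2 • 1) * U₁ = _
    rw [Matrix.mul_add, Matrix.add_mul, ← Matrix.mul_assoc, ← Matrix.mul_assoc, hU1Z,
      Matrix.mul_assoc ((Γ₁ * Vᵀ) * B), hZU1, Matrix.mul_smul, Matrix.mul_one,
      Matrix.smul_mul, hU1, Matrix.mul_assoc]
  set D : Matrix (Fin d) (Fin d) ℝ := Matrix.diagonal (fun i => ((g i) ^ 2)⁻¹) with hD
  have hDD : Γ₁ * D * Γ₁ = 1 := by
    rw [hD, Matrix.diagonal_mul_diagonal, Matrix.diagonal_mul_diagonal]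
    have h1 : (fun i => g i * (g i ^ 2)⁻¹ * g i) = fun _ => (1:ℝ) := by
      funext i
      field_simp
      rw [div_self (hgne i)]
    rw [h1]
    simp
  have hVx : ∀ (X : Matrix (Fin d) (Fin d) ℝ), Vᵀ * (V * X) = X := fun X => by
    rw [← Matrix.mul_assoc, hV, Matrix.one_mul]
  have key : Γ₁ * Vᵀ * (B + σ2 • (V * D * Vᵀ)) * V * Γ₁
      = Γ₁ * Vᵀ * B * (V * Γ₁) + σ2 • 1 := by
    rw [Matrix.mul_add, Matrix.add_mul, Matrix.add_mul]
    congr 1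
    · rw [Matrix.mul_assoc]
    · rw [Matrix.mul_smul, Matrix.smul_mul, Matrix.smul_mul]
      congr 1
      calc Γ₁ * Vᵀ * (V * D * Vᵀ) * V * Γ₁
          = Γ₁ * (Vᵀ * (V * (D * (Vᵀ * (V * Γ₁))))) := by
            simp [Matrix.mul_assoc]
        _ = Γ₁ * (D * Γ₁) := by rw [hVx, hVx]
        _ = 1 := by rw [← Matrix.mul_assoc, hDD]
  have hgoal4 : K₁₁ = Γ₁ * Vᵀ * (B + σ2 • (V * D * Vᵀ)) * V * Γ₁ := by
    rw [key, hK11']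
  -- positive definiteness of K₁₁
  have hpsd : (Γ₁ * Vᵀ * B * (V * Γ₁)).PosSemidef := by
    have h := hB.conjTranspose_mul_mul_same (V * Γ₁)
    have ht : (V * Γ₁)ᴴ = Γ₁ * Vᵀ := by
      rw [conjTranspose_eq_transpose_of_trivial, Matrix.transpose_mul, hΓt]
    rwa [ht] at h
  have hσ1 : (σ2 • (1 : Matrix (Fin d) (Fin d) ℝ)).PosDef := by
    rw [Matrix.smul_one_eq_diagonal]
    exact Matrix.posDef_diagonal_iff.mpr fun _ => hσ
  have hK11pd : K₁₁.PosDef := by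
    rw [hK11']
    exact Matrix.PosDef.posSemidef_add hpsd hσ1
  have hK11det : (0:ℝ) < K₁₁.det := hK11pd.det_pos
  have hK11unit : IsUnit K₁₁.det := hK11det.ne'.isUnit
  have hK11inv : K₁₁ * K₁₁⁻¹ = 1 := Matrix.mul_nonsing_inv _ hK11unit
  -- K * U₁ = U₁ * K₁₁
  have hKU1 : K * U₁ = U₁ * K₁₁ := by
    calc K * U₁ = (1 : Matrix (Fin (d+e)) (Fin (d+e)) ℝ) * (K * U₁) := by rw [Matrix.one_mul]
      _ = (U₁ * U₁ᵀ + U₂ * U₂ᵀ) * (K * U₁) := by rw [hcomplete]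
      _ = U₁ * (U₁ᵀ * K * U₁) + U₂ * (U₂ᵀ * K * U₁) := by
          rw [Matrix.add_mul, Matrix.mul_assoc, Matrix.mul_assoc, Matrix.mul_assoc,
            Matrix.mul_assoc]
      _ = U₁ * K₁₁ := by rw [hK21, Matrix.mul_zero, add_zero]
  -- inverse of K
  have hKinv : K⁻¹ = U₁ * K₁₁⁻¹ * U₁ᵀ + σ2⁻¹ • (U₂ * U₂ᵀ) := by
    refine (Matrix.inv_eq_right_inv ?_)
    rw [Matrix.mul_add, Matrix.mul_smul, ← Matrix.mul_assoc, ← Matrix.mul_assoc, hKU1,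
      Matrix.mul_assoc U₁ K₁₁, hK11inv, Matrix.mul_one, ← Matrix.mul_assoc K U₂, hKU2, Matrix.smul_mul,
      smul_smul, inv_mul_cancel₀ hσ.ne', one_smul, hcomplete]
  -- trace identity
  have htrace : (K⁻¹ * C).trace
      = (K₁₁⁻¹ * (U₁ᵀ * C * U₁)).trace + (U₂ᵀ * C * U₂).trace / σ2 := by
    rw [hKinv, Matrix.add_mul, Matrix.smul_mul, Matrix.trace_add, Matrix.trace_smul]
    congr 1
    · rw [Matrix.mul_assoc, Matrix.mul_assoc, Matrix.trace_mul_comm U₁,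
        Matrix.mul_assoc, Matrix.mul_assoc, ← Matrix.mul_assoc (U₁ᵀ)]
    · rw [Matrix.mul_assoc, Matrix.trace_mul_comm U₂, Matrix.mul_assoc, smul_eq_mul,
        div_eq_inv_mul]
  -- determinant
  have hKP : K * Matrix.fromCols U₁ U₂
      = Matrix.fromCols U₁ U₂ * (Matrix.fromBlocks K₁₁ 0 0 (σ2 • 1) : Matrix (Fin d ⊕ Fin e) (Fin d ⊕ Fin e) ℝ) := by
    rw [Matrix.mul_fromCols, Matrix.fromCols_mul_fromBlocks, hKU1, hKU2]
    simp [Matrix.mul_smul]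
  have hPPt : Matrix.fromCols U₁ U₂ * (Matrix.fromCols U₁ U₂)ᵀ = 1 := by
    rw [Matrix.transpose_fromCols, Matrix.fromCols_mul_fromRows, hcomplete]
  have hPtP : (Matrix.fromCols U₁ U₂)ᵀ * Matrix.fromCols U₁ U₂ = 1 := by
    rw [Matrix.transpose_fromCols, Matrix.fromRows_mul_fromCols, hU1, hU2, hU12, hU21,
      Matrix.fromBlocks_one]
  have hKeq : K = Matrix.fromCols U₁ U₂ * (Matrix.fromBlocks K₁₁ 0 0 (σ2 • 1) : Matrix (Fin d ⊕ Fin e) (Fin d ⊕ Fin e) ℝ)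
      * (Matrix.fromCols U₁ U₂)ᵀ := by
    calc K = K * (Matrix.fromCols U₁ U₂ * (Matrix.fromCols U₁ U₂)ᵀ) := by
          rw [hPPt, Matrix.mul_one]
      _ = K * Matrix.fromCols U₁ U₂ * (Matrix.fromCols U₁ U₂)ᵀ := by
          rw [Matrix.mul_assoc]
      _ = _ := by rw [hKP]
  have hdet : K.det = K₁₁.det * σ2 ^ e := by
    have h1 : K = ((Matrix.fromCols U₁ U₂).submatrix id ⇑finSumFinEquiv.symm)
        * ((Matrix.fromBlocks K₁₁ 0 0 (σ2 • 1)).submatrix ⇑finSumFinEquiv.symm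
            ⇑finSumFinEquiv.symm)
        * (((Matrix.fromCols U₁ U₂)ᵀ).submatrix ⇑finSumFinEquiv.symm id) := by
      rw [Matrix.submatrix_mul_equiv (Matrix.fromCols U₁ U₂) _ id finSumFinEquiv.symm _,
        Matrix.submatrix_mul_equiv _ ((Matrix.fromCols U₁ U₂)ᵀ) id finSumFinEquiv.symm id,
        Matrix.submatrix_id_id]
      exact hKeq
    have h2 : (((Matrix.fromCols U₁ U₂)ᵀ).submatrix ⇑finSumFinEquiv.symm id).det
        * ((Matrix.fromCols U₁ U₂).submatrix id ⇑finSumFinEquiv.symm).det = 1 := by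
      rw [← Matrix.det_mul,
        ← Matrix.submatrix_mul ((Matrix.fromCols U₁ U₂)ᵀ) (Matrix.fromCols U₁ U₂)
          ⇑finSumFinEquiv.symm id ⇑finSumFinEquiv.symm Function.bijective_id,
        hPtP, Matrix.submatrix_one_equiv, Matrix.det_one]
    have h3 : ((Matrix.fromBlocks K₁₁ 0 0 (σ2 • (1 : Matrix (Fin e) (Fin e) ℝ))).submatrix ⇑finSumFinEquiv.symm
        ⇑finSumFinEquiv.symm).det = K₁₁.det * σ2 ^ e := by
      rw [Matrix.det_submatrix_equiv_self, Matrix.det_fromBlocks_zero₂₁, Matrix.det_smul,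
        Matrix.det_one, mul_one]
      simp
    calc K.det = _ := congrArg Matrix.det h1
      _ = K₁₁.det * σ2 ^ e := by
        rw [Matrix.det_mul, Matrix.det_mul, h3]
        calc ((Matrix.fromCols U₁ U₂).submatrix id ⇑finSumFinEquiv.symm).det
              * (K₁₁.det * σ2 ^ e)
              * (((Matrix.fromCols U₁ U₂)ᵀ).submatrix ⇑finSumFinEquiv.symm id).det
            = ((((Matrix.fromCols U₁ U₂)ᵀ).submatrix ⇑finSumFinEquiv.symm id).det
              * ((Matrix.fromCols U₁ U₂).submatrix id ⇑finSumFinEquiv.symm).det)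
              * (K₁₁.det * σ2 ^ e) := by ring
          _ = K₁₁.det * σ2 ^ e := by rw [h2, one_mul]
  have hlog : Real.log K.det = Real.log K₁₁.det + e * Real.log σ2 := by
    rw [hdet, Real.log_mul hK11det.ne' (pow_ne_zero e hσ.ne'), Real.log_pow]
  exact ⟨hK12, hK21, hK22, hgoal4, hlog, htrace⟩
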